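/- Let π^ag be a randomized policy such that for each round i and every partial realization ψ_{i-1}, the conditional expected marginal gain of its i-th selection satisfies E_ω[Δ(π^ag(ω, ψ_{i-1}) | ψ_{i-1})] ≥ α_i · max_e Δ(e | ψ_{i-1}). If f is adaptive monotone and adaptive submodular, then for any randomized policy π* selecting at most r items and any 0 ≤ i < r: E_ω[f_avg(π*(ω)) − f_avg(π^ag_i(ω))] ≤ (1 − α_i/r) · E_ω[f_avg(π*(ω)) − f_avg(π^ag_{i-1}(ω))]. -/

import Mathlib

open Finset
open scoped Classical

section Adaptive

variable {E O : Type*} [Fintype E] [Fintype O] [DecidableEq E] [Nonempty E]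

/-- A partial realization: a partial assignment of states to items. -/
abbrev PReal (E O : Type*) := E → Option O

/-- A (full) realization `φ` is consistent with a partial realization `ψ`
(written `φ ∼ ψ`) if `φ` agrees with `ψ` on the domain of `ψ`. -/
def consistentR (φ : E → O) (ψ : PReal E O) : Prop := ∀ e o, ψ e = some o → φ e = o

/-- The domain of a partial realization, i.e. the set of items already selected. -/
noncomputable def pdom (ψ : PReal E O) : Finset E :=
  Finset.univ.filter fun e => (ψ e).isSome

/-- The probability `Pr[Φ ∼ ψ]` that the random realization is consistent with `ψ`. -/
noncomputable def prMass (p : (E → O) → ℝ) (ψ : PReal E O) : ℝ :=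
  ∑ φ ∈ Finset.univ.filter (fun φ => consistentR φ ψ), p φ

/-- The conditional expected marginal benefit `Δ(e | ψ)` of item `e` given the
partial realization `ψ`. -/
noncomputable def marginal (p : (E → O) → ℝ) (f : Finset E → (E → O) → ℝ)
    (e : E) (ψ : PReal E O) : ℝ :=
  (∑ φ ∈ Finset.univ.filter (fun φ => consistentR φ ψ),
      p φ * (f (insert e (pdom ψ)) φ - f (pdom ψ) φ)) / prMass p ψ

/-- `max_e Δ(e | ψ)`, the best single-item conditional marginal benefit. -/
noncomputable def maxMarginal (p : (E → O) → ℝ) (f : Finset E → (E → O) → ℝ)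
    (ψ : PReal E O) : ℝ :=
  Finset.univ.sup' Finset.univ_nonempty (fun e => marginal p f e ψ)

/-- Adaptive monotonicity: `Δ(e | ψ) ≥ 0` for every `e` and every `ψ` with
`Pr[Φ ∼ ψ] > 0`. -/
def AdaptiveMonotone (p : (E → O) → ℝ) (f : Finset E → (E → O) → ℝ) : Prop :=
  ∀ ψ : PReal E O, 0 < prMass p ψ → ∀ e : E, 0 ≤ marginal p f e ψ

/-- `ψ` is a subrealization of `ψ'`. -/
def subreal (ψ ψ' : PReal E O) : Prop := ∀ e o, ψ e = some o → ψ' e = some o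

/-- Adaptive submodularity: `Δ(e | ψ) ≥ Δ(e | ψ')` whenever `ψ ⊆ ψ'` and
`e ∉ dom(ψ')`. -/
def AdaptiveSubmodular (p : (E → O) → ℝ) (f : Finset E → (E → O) → ℝ) : Prop :=
  ∀ ψ ψ' : PReal E O, subreal ψ ψ' → ∀ e ∉ pdom ψ', marginal p f e ψ' ≤ marginal p f e ψ

/-- A deterministic adaptive policy: picks the next item from the current
partial realization. -/
abbrev Policy (E O : Type*) := PReal E O → E

/-- `runP π φ i = Ψ_i(π, φ)`: the partial realization observed after policy `π`
selects its first `i` items under realization `φ`. -/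
noncomputable def runP (π : Policy E O) (φ : E → O) : ℕ → PReal E O
  | 0 => fun _ => none
  | (i + 1) =>
      Function.update (runP π φ i) (π (runP π φ i)) (some (φ (π (runP π φ i))))

/-- `favg p f π i = f_avg(π_i)`: the expected utility of the truncated policy `π_i`. -/
noncomputable def favg (p : (E → O) → ℝ) (f : Finset E → (E → O) → ℝ)
    (π : Policy E O) (i : ℕ) : ℝ :=
  ∑ φ : E → O, p φ * f (pdom (runP π φ i)) φ

end Adaptive

set_option linter.unusedSectionVars false
set_option linter.unusedVariables false

-- ===================== AUX =====================

section Aux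

variable {E O : Type*} [Fintype E] [Fintype O] [DecidableEq E] [Nonempty E]

lemma pdom_update (ψ : PReal E O) (e : E) (x : O) :
    pdom (Function.update ψ e (some x)) = insert e (pdom ψ) := by
  ext a
  by_cases h : a = e <;>
    simp [pdom, Function.update, h]

lemma pdom_none : pdom (fun _ => (none : Option O)) = (∅ : Finset E) := by
  simp [pdom]

lemma consistent_runP (π : Policy E O) (φ : E → O) (k : ℕ) :
    consistentR φ (runP π φ k) := by
  induction k with
  | zero => intro e o h; simp [runP] at h
  | succ k ih =>
      intro e o h
      by_cases he : e = π (runP π φ k)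
      · subst he
        simp [runP, Function.update] at h
        exact h
      · simp [runP, Function.update, he] at h
        exact ih e o h

lemma subreal_runP_succ (π : Policy E O) (φ : E → O) (k : ℕ) :
    subreal (runP π φ k) (runP π φ (k + 1)) := by
  intro e o h
  by_cases he : e = π (runP π φ k)
  · subst he
    have := consistent_runP π φ k _ _ h
    simp [runP, Function.update, ← this]
  · simp [runP, Function.update, he, h]

lemma subreal_trans {ψ₁ ψ₂ ψ₃ : PReal E O} (h : subreal ψ₁ ψ₂) (h' : subreal ψ₂ ψ₃) :
    subreal ψ₁ ψ₃ := fun e o he => h' e o (h e o he)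

lemma subreal_runP (π : Policy E O) (φ : E → O) {k m : ℕ} (h : k ≤ m) :
    subreal (runP π φ k) (runP π φ m) := by
  induction m with
  | zero => have : k = 0 := Nat.le_zero.mp h; subst this; exact fun e o he => he
  | succ m ih =>
      rcases Nat.lt_or_ge k (m+1) with h' | h'
      · exact subreal_trans (ih (Nat.lt_succ_iff.mp h')) (subreal_runP_succ π φ m)
      · have : k = m + 1 := le_antisymm h h'
        subst this; exact fun e o he => he

lemma pdom_subset_of_subreal {ψ ψ' : PReal E O} (h : subreal ψ ψ') :
    pdom ψ ⊆ pdom ψ' := by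
  intro e he
  simp only [pdom, mem_filter, mem_univ, true_and, Option.isSome_iff_exists] at he ⊢
  obtain ⟨o, ho⟩ := he
  exact ⟨o, h e o ho⟩

lemma consistent_of_subreal {φ : E → O} {ψ ψ' : PReal E O} (h : subreal ψ ψ')
    (h' : consistentR φ ψ') : consistentR φ ψ := fun e o he => h' e o (h e o he)

lemma runP_eq_of_consistent {π : Policy E O} {φ φ' : E → O} {j : ℕ} {ψ : PReal E O}
    (h : runP π φ j = ψ) (h' : consistentR φ' ψ) : runP π φ' j = ψ := by
  subst h
  suffices H : ∀ k ≤ j, runP π φ' k = runP π φ k from H j le_rfl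
  intro k hk
  induction k with
  | zero => rfl
  | succ k ih =>
      have hk' : k ≤ j := Nat.le_of_succ_le hk
      have ihk := ih hk'
      have he : runP π φ (k+1) (π (runP π φ k)) = some (φ (π (runP π φ k))) := by
        simp [runP, Function.update]
      have hsome : runP π φ j (π (runP π φ k)) = some (φ (π (runP π φ k))) :=
        subreal_runP π φ hk _ _ he
      have : φ' (π (runP π φ k)) = φ (π (runP π φ k)) := h' _ _ hsome
      simp only [runP, ihk, this]

end Aux

section Aux2

variable {E O : Type*} [Fintype E] [Fintype O] [DecidableEq E] [Nonempty E]

/-- Merge of two partial realizations, preferring the first. -/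
noncomputable def pmerge (ψ₁ ψ₂ : PReal E O) : PReal E O :=
  fun e => (ψ₁ e).elim (ψ₂ e) some

lemma pmerge_self (ψ : PReal E O) : pmerge ψ ψ = ψ := by
  funext e; cases h : ψ e <;> simp [pmerge, h]

lemma pmerge_none (ψ : PReal E O) : pmerge ψ (fun _ => none) = ψ := by
  funext e; cases h : ψ e <;> simp [pmerge, h]

lemma pmerge_none' (ψ : PReal E O) : pmerge (fun _ => none) ψ = ψ := by
  funext e; simp [pmerge]

lemma pdom_pmerge (ψ₁ ψ₂ : PReal E O) :
    pdom (pmerge ψ₁ ψ₂) = pdom ψ₁ ∪ pdom ψ₂ := by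
  ext e
  simp only [pdom, Finset.mem_union, Finset.mem_filter, Finset.mem_univ, true_and]
  cases h : ψ₁ e <;> simp [pmerge, h]

lemma subreal_pmerge_left (ψ₁ ψ₂ : PReal E O) : subreal ψ₁ (pmerge ψ₁ ψ₂) := by
  intro e o h; simp [pmerge, h]

lemma consistent_pmerge {φ : E → O} {ψ₁ ψ₂ : PReal E O}
    (h₁ : consistentR φ ψ₁) (h₂ : consistentR φ ψ₂) : consistentR φ (pmerge ψ₁ ψ₂) := by
  intro e o h
  cases h' : ψ₁ e with
  | some o' => simp [pmerge, h'] at h; subst h; exact h₁ e _ h'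
  | none => simp [pmerge, h'] at h; exact h₂ e o h

lemma consistent_of_pmerge_left {φ : E → O} {ψ₁ ψ₂ : PReal E O}
    (h : consistentR φ (pmerge ψ₁ ψ₂)) : consistentR φ ψ₁ :=
  consistent_of_subreal (subreal_pmerge_left ψ₁ ψ₂) h

lemma consistent_of_pmerge_right {φ φ₀ : E → O} {ψ₁ ψ₂ : PReal E O}
    (h₀₁ : consistentR φ₀ ψ₁) (h₀₂ : consistentR φ₀ ψ₂)
    (h : consistentR φ (pmerge ψ₁ ψ₂)) : consistentR φ ψ₂ := by
  intro e o he
  cases h' : ψ₁ e with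
  | some o' =>
      have : o' = o := by rw [← h₀₁ e o' h', h₀₂ e o he]
      subst this
      exact h e o' (by simp [pmerge, h'])
  | none => exact h e o (by simp [pmerge, h', he])

lemma fiber_single {π : Policy E O} {j : ℕ} {ψ : PReal E O} {φ₀ : E → O}
    (h₀ : runP π φ₀ j = ψ) :
    Finset.univ.filter (fun φ => runP π φ j = ψ)
      = Finset.univ.filter (fun φ => consistentR φ ψ) := by
  ext φ
  simp only [mem_filter, mem_univ, true_and]
  constructor
  · rintro rfl; exact consistent_runP π φ j
  · intro h; exact runP_eq_of_consistent h₀ h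

lemma fiber_pair {π₁ π₂ : Policy E O} {j k : ℕ} {ψ₁ ψ₂ : PReal E O} {φ₀ : E → O}
    (h₁ : runP π₁ φ₀ j = ψ₁) (h₂ : runP π₂ φ₀ k = ψ₂) :
    Finset.univ.filter (fun φ => runP π₁ φ j = ψ₁ ∧ runP π₂ φ k = ψ₂)
      = Finset.univ.filter (fun φ => consistentR φ (pmerge ψ₁ ψ₂)) := by
  have hc₁ : consistentR φ₀ ψ₁ := h₁ ▸ consistent_runP π₁ φ₀ j
  have hc₂ : consistentR φ₀ ψ₂ := h₂ ▸ consistent_runP π₂ φ₀ k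
  ext φ
  simp only [mem_filter, mem_univ, true_and]
  constructor
  · rintro ⟨rfl, rfl⟩
    exact consistent_pmerge (consistent_runP π₁ φ j) (consistent_runP π₂ φ k)
  · intro h
    exact ⟨runP_eq_of_consistent h₁ (consistent_of_pmerge_left h),
      runP_eq_of_consistent h₂ (consistent_of_pmerge_right hc₁ hc₂ h)⟩

end Aux2

section Aux3

variable {E O : Type*} [Fintype E] [Fintype O] [DecidableEq E] [Nonempty E]
variable {p : (E → O) → ℝ} {f : Finset E → (E → O) → ℝ}

/-- Unnormalized marginal benefit. -/
noncomputable def mnum (p : (E → O) → ℝ) (f : Finset E → (E → O) → ℝ)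
    (e : E) (ψ : PReal E O) : ℝ :=
  ∑ φ ∈ Finset.univ.filter (fun φ => consistentR φ ψ),
    p φ * (f (insert e (pdom ψ)) φ - f (pdom ψ) φ)

lemma prMass_nonneg (hp : ∀ φ, 0 ≤ p φ) (ψ : PReal E O) : 0 ≤ prMass p ψ :=
  Finset.sum_nonneg fun φ _ => hp φ

lemma p_eq_zero_of_prMass_zero (hp : ∀ φ, 0 ≤ p φ) {ψ : PReal E O}
    (h : prMass p ψ = 0) :
    ∀ φ ∈ Finset.univ.filter (fun φ => consistentR φ ψ), p φ = 0 :=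
  (Finset.sum_eq_zero_iff_of_nonneg fun φ _ => hp φ).mp h

lemma mnum_eq (hp : ∀ φ, 0 ≤ p φ) (e : E) (ψ : PReal E O) :
    mnum p f e ψ = marginal p f e ψ * prMass p ψ := by
  by_cases h : prMass p ψ = 0
  · rw [h, mul_zero]
    exact Finset.sum_eq_zero fun φ hφ => by
      rw [p_eq_zero_of_prMass_zero hp h φ hφ, zero_mul]
  · rw [marginal, div_mul_cancel₀ _ h]; rfl

lemma mnum_nonneg (hp : ∀ φ, 0 ≤ p φ) (hmono : AdaptiveMonotone p f)
    (e : E) (ψ : PReal E O) : 0 ≤ mnum p f e ψ := by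
  rw [mnum_eq hp]
  rcases lt_or_eq_of_le (prMass_nonneg hp ψ) with h | h
  · exact mul_nonneg (hmono ψ h e) h.le
  · rw [← h, mul_zero]

lemma prMass_mono (hp : ∀ φ, 0 ≤ p φ) {ψ ψ' : PReal E O} (h : subreal ψ ψ') :
    prMass p ψ' ≤ prMass p ψ := by
  apply Finset.sum_le_sum_of_subset_of_nonneg
  · intro φ hφ
    simp only [mem_filter, mem_univ, true_and] at hφ ⊢
    exact consistent_of_subreal h hφ
  · exact fun φ _ _ => hp φ

lemma maxMarginal_ge (e : E) (ψ : PReal E O) :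
    marginal p f e ψ ≤ maxMarginal p f ψ := by
  exact Finset.le_sup' (fun e => marginal p f e ψ) (mem_univ e)

lemma maxMarginal_nonneg (hmono : AdaptiveMonotone p f) {ψ : PReal E O}
    (h : 0 < prMass p ψ) : 0 ≤ maxMarginal p f ψ :=
  le_trans (hmono ψ h (Classical.arbitrary E)) (maxMarginal_ge _ _)

lemma mnum_le (hp : ∀ φ, 0 ≤ p φ) (hmono : AdaptiveMonotone p f)
    (hsub : AdaptiveSubmodular p f) {ψ ψ' : PReal E O} (h : subreal ψ ψ') (e : E) :
    mnum p f e ψ' ≤ maxMarginal p f ψ * prMass p ψ' := by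
  rcases lt_or_eq_of_le (prMass_nonneg hp ψ') with hm | hm
  · have hψ : 0 < prMass p ψ := lt_of_lt_of_le hm (prMass_mono hp h)
    rw [mnum_eq hp]
    apply mul_le_mul_of_nonneg_right _ hm.le
    by_cases he : e ∈ pdom ψ'
    · have : marginal p f e ψ' = 0 := by
        rw [marginal, Finset.insert_eq_self.mpr he]
        simp
      rw [this]
      exact maxMarginal_nonneg hmono hψ
    · exact le_trans (hsub ψ ψ' h e he) (maxMarginal_ge e ψ)
  · rw [mnum_eq hp, ← hm, mul_zero, mul_zero]

end Aux3

section Aux4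

variable {E O : Type*} [Fintype E] [Fintype O] [DecidableEq E] [Nonempty E]
variable {p : (E → O) → ℝ} {f : Finset E → (E → O) → ℝ}

lemma Lstep (π₁ π₂ : Policy E O) (j k : ℕ) :
    (∑ φ : E → O, p φ * f (pdom (pmerge (runP π₁ φ j) (runP π₂ φ (k+1)))) φ)
      - (∑ φ : E → O, p φ * f (pdom (pmerge (runP π₁ φ j) (runP π₂ φ k))) φ)
    = ∑ pr : PReal E O × PReal E O,
        if ∃ φ, runP π₁ φ j = pr.1 ∧ runP π₂ φ k = pr.2
        then mnum p f (π₂ pr.2) (pmerge pr.1 pr.2) else 0 := by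
  rw [← Finset.sum_sub_distrib]
  have hsplit := Finset.sum_fiberwise (Finset.univ : Finset (E → O))
    (fun φ => ((runP π₁ φ j, runP π₂ φ k) : PReal E O × PReal E O))
    (fun φ => p φ * f (pdom (pmerge (runP π₁ φ j) (runP π₂ φ (k+1)))) φ
      - p φ * f (pdom (pmerge (runP π₁ φ j) (runP π₂ φ k))) φ)
  rw [← hsplit]
  apply Finset.sum_congr rfl
  rintro ⟨ψ₁, ψ₂⟩ -
  by_cases hex : ∃ φ, runP π₁ φ j = ψ₁ ∧ runP π₂ φ k = ψ₂
  · obtain ⟨φ₀, h1, h2⟩ := hex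
    rw [if_pos ⟨φ₀, h1, h2⟩]
    have hfe : (Finset.univ.filter
          (fun φ => ((runP π₁ φ j, runP π₂ φ k) : PReal E O × PReal E O) = (ψ₁, ψ₂)))
        = Finset.univ.filter (fun φ => runP π₁ φ j = ψ₁ ∧ runP π₂ φ k = ψ₂) := by
      apply Finset.filter_congr; intro φ _; simp [Prod.ext_iff]
    rw [hfe, fiber_pair h1 h2, mnum]
    apply Finset.sum_congr rfl
    intro φ hφ
    simp only [mem_filter, mem_univ, true_and] at hφ
    have hc₁ : consistentR φ₀ ψ₁ := h1 ▸ consistent_runP π₁ φ₀ j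
    have hc₂ : consistentR φ₀ ψ₂ := h2 ▸ consistent_runP π₂ φ₀ k
    have hφ1 : runP π₁ φ j = ψ₁ :=
      runP_eq_of_consistent h1 (consistent_of_pmerge_left hφ)
    have hφ2 : runP π₂ φ k = ψ₂ :=
      runP_eq_of_consistent h2 (consistent_of_pmerge_right hc₁ hc₂ hφ)
    have hrun : runP π₂ φ (k+1)
        = Function.update ψ₂ (π₂ ψ₂) (some (φ (π₂ ψ₂))) := by
      simp only [runP, hφ2]
    have hd1 : pdom (pmerge (runP π₁ φ j) (runP π₂ φ (k+1)))
        = insert (π₂ ψ₂) (pdom (pmerge ψ₁ ψ₂)) := by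
      rw [hφ1, hrun, pdom_pmerge, pdom_pmerge, pdom_update, Finset.union_insert]
    have hd2 : pdom (pmerge (runP π₁ φ j) (runP π₂ φ k)) = pdom (pmerge ψ₁ ψ₂) := by
      rw [hφ1, hφ2]
    rw [hd1, hd2, mul_sub]
  · rw [if_neg hex]
    apply Finset.sum_eq_zero
    intro φ hφ
    simp only [mem_filter, mem_univ, true_and, Prod.ext_iff] at hφ
    exact absurd ⟨φ, hφ⟩ hex

end Aux4

section Aux5

variable {E O : Type*} [Fintype E] [Fintype O] [DecidableEq E] [Nonempty E]
variable {p : (E → O) → ℝ} {f : Finset E → (E → O) → ℝ}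

lemma Lcollect (π₁ π₂ : Policy E O) (j k : ℕ) (h : PReal E O → ℝ) :
    (∑ pr : PReal E O × PReal E O,
        if ∃ φ, runP π₁ φ j = pr.1 ∧ runP π₂ φ k = pr.2
        then h pr.1 * prMass p (pmerge pr.1 pr.2) else 0)
    = ∑ φ : E → O, p φ * h (runP π₁ φ j) := by
  have hsplit := Finset.sum_fiberwise (Finset.univ : Finset (E → O))
    (fun φ => ((runP π₁ φ j, runP π₂ φ k) : PReal E O × PReal E O))
    (fun φ => p φ * h (runP π₁ φ j))
  rw [← hsplit]
  apply Finset.sum_congr rfl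
  rintro ⟨ψ₁, ψ₂⟩ -
  by_cases hex : ∃ φ, runP π₁ φ j = ψ₁ ∧ runP π₂ φ k = ψ₂
  · obtain ⟨φ₀, h1, h2⟩ := hex
    rw [if_pos ⟨φ₀, h1, h2⟩]
    have hfe : (Finset.univ.filter
          (fun φ => ((runP π₁ φ j, runP π₂ φ k) : PReal E O × PReal E O) = (ψ₁, ψ₂)))
        = Finset.univ.filter (fun φ => runP π₁ φ j = ψ₁ ∧ runP π₂ φ k = ψ₂) := by
      apply Finset.filter_congr; intro φ _; simp [Prod.ext_iff]
    rw [hfe, fiber_pair h1 h2, prMass, Finset.mul_sum]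
    apply Finset.sum_congr rfl
    intro φ hφ
    simp only [mem_filter, mem_univ, true_and] at hφ
    have hφ1 : runP π₁ φ j = ψ₁ :=
      runP_eq_of_consistent h1 (consistent_of_pmerge_left hφ)
    rw [hφ1, mul_comm]
  · rw [if_neg hex]
    apply (Finset.sum_eq_zero _).symm
    intro φ hφ
    simp only [mem_filter, mem_univ, true_and, Prod.ext_iff] at hφ
    exact absurd ⟨φ, hφ⟩ hex

lemma tele_mono (hp : ∀ φ, 0 ≤ p φ) (hmono : AdaptiveMonotone p f)
    (π₁ π₂ : Policy E O) (j : ℕ) : ∀ k : ℕ,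
    (∑ φ : E → O, p φ * f (pdom (runP π₁ φ j)) φ)
      ≤ ∑ φ : E → O, p φ * f (pdom (pmerge (runP π₁ φ j) (runP π₂ φ k))) φ
  | 0 => by
      apply le_of_eq
      apply Finset.sum_congr rfl
      intro φ _
      rw [show runP π₂ φ 0 = (fun _ => none) from rfl, pmerge_none]
  | (k+1) => by
      refine le_trans (tele_mono hp hmono π₁ π₂ j k) ?_
      have hstep := Lstep (p := p) (f := f) π₁ π₂ j k
      have hnn : 0 ≤ ∑ pr : PReal E O × PReal E O,
          if ∃ φ, runP π₁ φ j = pr.1 ∧ runP π₂ φ k = pr.2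
          then mnum p f (π₂ pr.2) (pmerge pr.1 pr.2) else 0 := by
        apply Finset.sum_nonneg
        rintro ⟨ψ₁, ψ₂⟩ -
        split
        · exact mnum_nonneg hp hmono _ _
        · exact le_rfl
      linarith

lemma tele_sub (hp : ∀ φ, 0 ≤ p φ) (hmono : AdaptiveMonotone p f)
    (hsub : AdaptiveSubmodular p f) (π₁ π₂ : Policy E O) (j : ℕ) : ∀ k : ℕ,
    (∑ φ : E → O, p φ * f (pdom (pmerge (runP π₁ φ j) (runP π₂ φ k))) φ)
      ≤ (∑ φ : E → O, p φ * f (pdom (runP π₁ φ j)) φ)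
        + k * ∑ φ : E → O, p φ * maxMarginal p f (runP π₁ φ j)
  | 0 => by
      apply le_of_eq
      rw [Nat.cast_zero, zero_mul, add_zero]
      apply Finset.sum_congr rfl
      intro φ _
      rw [show runP π₂ φ 0 = (fun _ => none) from rfl, pmerge_none]
  | (k+1) => by
      have ih := tele_sub hp hmono hsub π₁ π₂ j k
      have hstep := Lstep (p := p) (f := f) π₁ π₂ j k
      have hb : (∑ pr : PReal E O × PReal E O,
          if ∃ φ, runP π₁ φ j = pr.1 ∧ runP π₂ φ k = pr.2
          then mnum p f (π₂ pr.2) (pmerge pr.1 pr.2) else 0)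
          ≤ ∑ φ : E → O, p φ * maxMarginal p f (runP π₁ φ j) := by
        rw [← Lcollect (p := p) π₁ π₂ j k (fun ψ => maxMarginal p f ψ)]
        apply Finset.sum_le_sum
        rintro ⟨ψ₁, ψ₂⟩ -
        split
        · exact mnum_le hp hmono hsub (subreal_pmerge_left ψ₁ ψ₂) _
        · exact le_rfl
      push_cast
      linarith

lemma key_b (hp : ∀ φ, 0 ≤ p φ) (hmono : AdaptiveMonotone p f)
    (hsub : AdaptiveSubmodular p f) (π πs : Policy E O) (j m : ℕ) :
    favg p f πs m ≤ favg p f π j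
      + m * ∑ φ : E → O, p φ * maxMarginal p f (runP π φ j) := by
  have h1 : favg p f πs m
      ≤ ∑ φ : E → O, p φ * f (pdom (pmerge (runP π φ j) (runP πs φ m))) φ := by
    refine le_trans (tele_mono hp hmono πs π m j) (le_of_eq ?_)
    apply Finset.sum_congr rfl
    intro φ _
    rw [pdom_pmerge, pdom_pmerge, Finset.union_comm]
  exact le_trans h1 (tele_sub hp hmono hsub π πs j m)

end Aux5

section Aux6

variable {E O : Type*} [Fintype E] [Fintype O] [DecidableEq E] [Nonempty E]
variable {p : (E → O) → ℝ} {f : Finset E → (E → O) → ℝ}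

lemma diag_collapse (π : Policy E O) (j : ℕ) (ψ₁ : PReal E O) :
    (∑ ψ₂ : PReal E O, if ∃ φ, runP π φ j = ψ₁ ∧ runP π φ j = ψ₂
        then mnum p f (π ψ₂) (pmerge ψ₁ ψ₂) else 0)
    = if ∃ φ, runP π φ j = ψ₁ then mnum p f (π ψ₁) ψ₁ else 0 := by
  have h0 : ∀ b ∈ Finset.univ, b ≠ ψ₁ →
      (if ∃ φ, runP π φ j = ψ₁ ∧ runP π φ j = b
        then mnum p f (π b) (pmerge ψ₁ b) else 0) = 0 := by
    intro b _ hb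
    rw [if_neg]
    rintro ⟨φ, h1, h2⟩
    exact hb (h2 ▸ h1.symm ▸ rfl)
  rw [Finset.sum_eq_single ψ₁ h0 (fun h => absurd (mem_univ ψ₁) h), pmerge_self]
  congr 1
  simp only [eq_iff_iff]
  exact ⟨fun ⟨φ, h1, _⟩ => ⟨φ, h1⟩, fun ⟨φ, h1⟩ => ⟨φ, h1, h1⟩⟩

lemma step_a (π : Policy E O) (j : ℕ) :
    favg p f π (j+1) = favg p f π j
      + ∑ ψ : PReal E O, (if ∃ φ, runP π φ j = ψ then mnum p f (π ψ) ψ else 0) := by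
  have hstep := Lstep (p := p) (f := f) π π j j
  have hL1 : (∑ φ : E → O, p φ * f (pdom (pmerge (runP π φ j) (runP π φ (j+1)))) φ)
      = favg p f π (j+1) := by
    apply Finset.sum_congr rfl
    intro φ _
    rw [pdom_pmerge, Finset.union_eq_right.mpr
      (pdom_subset_of_subreal (subreal_runP_succ π φ j))]
  have hL2 : (∑ φ : E → O, p φ * f (pdom (pmerge (runP π φ j) (runP π φ j))) φ)
      = favg p f π j := by
    apply Finset.sum_congr rfl
    intro φ _
    rw [pmerge_self]
  have hdiag : (∑ pr : PReal E O × PReal E O,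
      if ∃ φ, runP π φ j = pr.1 ∧ runP π φ j = pr.2
      then mnum p f (π pr.2) (pmerge pr.1 pr.2) else 0)
      = ∑ ψ : PReal E O, (if ∃ φ, runP π φ j = ψ then mnum p f (π ψ) ψ else 0) := by
    rw [Fintype.sum_prod_type]
    exact Finset.sum_congr rfl fun ψ₁ _ => diag_collapse π j ψ₁
  rw [hL1, hL2, hdiag] at hstep
  linarith

lemma Lmass (π : Policy E O) (j : ℕ) (h : PReal E O → ℝ) :
    (∑ ψ : PReal E O, if ∃ φ, runP π φ j = ψ then h ψ * prMass p ψ else 0)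
      = ∑ φ : E → O, p φ * h (runP π φ j) := by
  have hsplit := Finset.sum_fiberwise (Finset.univ : Finset (E → O))
    (fun φ => runP π φ j) (fun φ => p φ * h (runP π φ j))
  rw [← hsplit]
  apply Finset.sum_congr rfl
  intro ψ _
  by_cases hex : ∃ φ, runP π φ j = ψ
  · obtain ⟨φ₀, h0⟩ := hex
    rw [if_pos ⟨φ₀, h0⟩, fiber_single h0, prMass, Finset.mul_sum]
    apply Finset.sum_congr rfl
    intro φ hφ
    simp only [mem_filter, mem_univ, true_and] at hφ
    rw [runP_eq_of_consistent h0 hφ, mul_comm]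
  · rw [if_neg hex]
    apply (Finset.sum_eq_zero _).symm
    intro φ hφ
    simp only [mem_filter, mem_univ, true_and] at hφ
    exact absurd ⟨φ, hφ⟩ hex

end Aux6


/-- (Lemma 4) Let `π^ag` be a randomized policy (internal randomness `ω` with law `q`)
that, at each round `i` and each partial realization `ψ_{i-1}`, has conditional (on the
history `Ψ_{i-1}(ω,φ) = ψ_{i-1}`) expected marginal gain at least `α_i · max_e Δ(e|ψ_{i-1})`.
If `f` is adaptive monotone and adaptive submodular, then for any randomized policy `π*`
selecting at most `r` items and any round `i` (`1 ≤ i ≤ r`):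
`E_ω[f_avg(π*(ω)) − f_avg(π^ag_i(ω))] ≤ (1 − α_i/r)·E_ω[f_avg(π*(ω)) − f_avg(π^ag_{i-1}(ω))]`. -/
theorem randomized_greedy_step {E O : Type*} [Fintype E] [Fintype O] [DecidableEq E]
    [Nonempty E] {Ωr Ωr' : Type*} [Fintype Ωr] [Fintype Ωr']
    (p : (E → O) → ℝ) (hp : ∀ φ, 0 ≤ p φ) (hp1 : ∑ φ : E → O, p φ = 1)
    (f : Finset E → (E → O) → ℝ) (hf : ∀ S φ, 0 ≤ f S φ)
    (hmono : AdaptiveMonotone p f) (hsub : AdaptiveSubmodular p f)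
    (q : Ωr → ℝ) (hq : ∀ ω, 0 ≤ q ω) (hq1 : ∑ ω : Ωr, q ω = 1)
    (q' : Ωr' → ℝ) (hq' : ∀ ω, 0 ≤ q' ω) (hq'1 : ∑ ω : Ωr', q' ω = 1)
    (Pag : Ωr → Policy E O) (Pstar : Ωr' → Policy E O)
    (r : ℕ) (hr : 0 < r) (α : ℕ → ℝ) (hα : ∀ i ∈ Finset.Icc 1 r, 0 ≤ α i ∧ α i ≤ 1)
    (hgreedy : ∀ i ∈ Finset.Icc 1 r, ∀ φ : E → O, ∀ ψ : PReal E O,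
      α i * maxMarginal p f ψ *
          (∑ ω ∈ Finset.univ.filter (fun ω : Ωr => runP (Pag ω) φ (i - 1) = ψ), q ω)
        ≤ ∑ ω ∈ Finset.univ.filter (fun ω : Ωr => runP (Pag ω) φ (i - 1) = ψ),
            q ω * marginal p f (Pag ω ψ) ψ)
    (i : ℕ) (hi : i ∈ Finset.Icc 1 r) :
    (∑ ω' : Ωr', q' ω' * favg p f (Pstar ω') r) - ∑ ω : Ωr, q ω * favg p f (Pag ω) i ≤
      (1 - α i / r) *
        ((∑ ω' : Ωr', q' ω' * favg p f (Pstar ω') r)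
          - ∑ ω : Ωr, q ω * favg p f (Pag ω) (i - 1)) := by
  
  obtain ⟨hi1, hir⟩ := Finset.mem_Icc.mp hi
  have hii : i - 1 + 1 = i := Nat.succ_pred_eq_of_pos hi1
  -- the ground set of realizations is nonempty
  have hEO : Nonempty (E → O) := by
    by_contra h
    rw [not_nonempty_iff] at h
    rw [Finset.univ_eq_empty, Finset.sum_empty] at hp1
    exact zero_ne_one hp1
  have o₀ : O := (Classical.arbitrary (E → O)) (Classical.arbitrary E)
  -- canonical realization consistent with a partial realization
  set φc : PReal E O → (E → O) := fun ψ e => (ψ e).getD o₀ with hφcdef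
  have hφc : ∀ ψ : PReal E O, consistentR (φc ψ) ψ := by
    intro ψ e o h
    simp [hφcdef, h]
  have hcond : ∀ (ω : Ωr) (ψ : PReal E O),
      (runP (Pag ω) (φc ψ) (i-1) = ψ) ↔ (∃ φ, runP (Pag ω) φ (i-1) = ψ) :=
    fun ω ψ => ⟨fun h => ⟨_, h⟩, fun ⟨_, h⟩ => runP_eq_of_consistent h (hφc ψ)⟩
  set A := ∑ ω' : Ωr', q' ω' * favg p f (Pstar ω') r with hA
  set B1 := ∑ ω : Ωr, q ω * favg p f (Pag ω) (i-1) with hB1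
  set B2 := ∑ ω : Ωr, q ω * favg p f (Pag ω) i with hB2
  set G : Ωr → ℝ :=
    fun ω => ∑ φ : E → O, p φ * maxMarginal p f (runP (Pag ω) φ (i-1)) with hG
  set M := ∑ ω : Ωr, q ω * G ω with hM
  -- Part (b): A - B1 ≤ r * M
  have hb : A - B1 ≤ r * M := by
    have hAB : A - B1 = ∑ ω : Ωr, q ω * (A - favg p f (Pag ω) (i-1)) := by
      simp only [mul_sub, Finset.sum_sub_distrib, ← Finset.sum_mul, hq1, one_mul]
      rfl
    have hA_le : ∀ ω : Ωr, A - favg p f (Pag ω) (i-1) ≤ r * G ω := by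
      intro ω
      have h1 : A ≤ ∑ ω' : Ωr', q' ω' * (favg p f (Pag ω) (i-1) + r * G ω) := by
        apply Finset.sum_le_sum
        intro ω' _
        exact mul_le_mul_of_nonneg_left
          (key_b hp hmono hsub (Pag ω) (Pstar ω') (i-1) r) (hq' ω')
      rw [← Finset.sum_mul, hq'1, one_mul] at h1
      linarith
    rw [hAB, hM, Finset.mul_sum]
    apply Finset.sum_le_sum
    intro ω _
    rw [show (r : ℝ) * (q ω * G ω) = q ω * (r * G ω) by ring]
    exact mul_le_mul_of_nonneg_left (hA_le ω) (hq ω)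
  -- Part (a): α i * M ≤ B2 - B1
  have ha : α i * M ≤ B2 - B1 := by
    have hBB : B2 - B1 = ∑ ψ : PReal E O,
        ∑ ω ∈ Finset.univ.filter (fun ω : Ωr => runP (Pag ω) (φc ψ) (i-1) = ψ),
          q ω * mnum p f (Pag ω ψ) ψ := by
      have hBB1 : B2 - B1 = ∑ ω : Ωr, q ω *
          (∑ ψ : PReal E O,
            if ∃ φ, runP (Pag ω) φ (i-1) = ψ then mnum p f (Pag ω ψ) ψ else 0) := by
        rw [hB2, hB1, ← Finset.sum_sub_distrib]
        apply Finset.sum_congr rfl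
        intro ω _
        have hst := step_a (p := p) (f := f) (Pag ω) (i-1)
        rw [hii] at hst
        rw [hst]
        ring
      rw [hBB1]
      simp only [Finset.mul_sum, mul_ite, mul_zero]
      rw [Finset.sum_comm]
      apply Finset.sum_congr rfl
      intro ψ _
      rw [Finset.sum_filter]
      apply Finset.sum_congr rfl
      intro ω _
      congr 1
      simp only [eq_iff_iff]
      exact (hcond ω ψ).symm
    have hMM : M = ∑ ψ : PReal E O,
        (∑ ω ∈ Finset.univ.filter (fun ω : Ωr => runP (Pag ω) (φc ψ) (i-1) = ψ), q ω)
          * (maxMarginal p f ψ * prMass p ψ) := by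
      rw [hM]
      have : ∀ ω : Ωr, G ω = ∑ ψ : PReal E O,
          if ∃ φ, runP (Pag ω) φ (i-1) = ψ
          then maxMarginal p f ψ * prMass p ψ else 0 := by
        intro ω
        rw [hG]
        exact (Lmass (Pag ω) (i-1) (maxMarginal p f)).symm
      simp only [this, Finset.mul_sum, mul_ite, mul_zero]
      rw [Finset.sum_comm]
      apply Finset.sum_congr rfl
      intro ψ _
      rw [Finset.sum_mul, Finset.sum_filter]
      apply Finset.sum_congr rfl
      intro ω _
      congr 1
      simp only [eq_iff_iff]
      exact (hcond ω ψ).symm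
    rw [hBB, hMM, Finset.mul_sum]
    apply Finset.sum_le_sum
    intro ψ _
    have hgr := hgreedy i hi (φc ψ) ψ
    have hpm : 0 ≤ prMass p ψ := prMass_nonneg hp ψ
    calc α i * ((∑ ω ∈ Finset.univ.filter
            (fun ω : Ωr => runP (Pag ω) (φc ψ) (i-1) = ψ), q ω)
            * (maxMarginal p f ψ * prMass p ψ))
        = (α i * maxMarginal p f ψ *
            (∑ ω ∈ Finset.univ.filter
              (fun ω : Ωr => runP (Pag ω) (φc ψ) (i-1) = ψ), q ω)) * prMass p ψ := by
          ring
      _ ≤ (∑ ω ∈ Finset.univ.filter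
              (fun ω : Ωr => runP (Pag ω) (φc ψ) (i-1) = ψ),
            q ω * marginal p f (Pag ω ψ) ψ) * prMass p ψ :=
          mul_le_mul_of_nonneg_right hgr hpm
      _ = ∑ ω ∈ Finset.univ.filter
              (fun ω : Ωr => runP (Pag ω) (φc ψ) (i-1) = ψ),
            q ω * mnum p f (Pag ω ψ) ψ := by
          rw [Finset.sum_mul]
          apply Finset.sum_congr rfl
          intro ω _
          rw [mnum_eq hp]
          ring
  -- final algebra
  have hα0 : 0 ≤ α i := (hα i hi).1
  have hr' : (0 : ℝ) < r := by exact_mod_cast hr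
  have h1 : α i / r * (A - B1) ≤ α i / r * (r * M) :=
    mul_le_mul_of_nonneg_left hb (div_nonneg hα0 hr'.le)
  have h2 : α i / r * (r * M) = α i * M := by
    field_simp
  nlinarith [ha, h1, h2]
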